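/- If G is a chordal graph, then α(G) = Γ(G) = IR(G). -/

import Mathlib

open Finset

open scoped Classical

noncomputable section

namespace IndicatedDom

variable {V : Type*} [Fintype V]

/-- Closed neighborhood `N[v]` as a `Finset`. -/
def cnbhd (G : SimpleGraph V) (v : V) : Finset V :=
  insert v (G.neighborFinset v)

/-- `D` is a dominating set of `G`. -/
def Dominates (G : SimpleGraph V) (D : Finset V) : Prop :=
  ∀ u, ∃ v ∈ D, u ∈ cnbhd G v

/-- The set of vertices not dominated by `D`. -/
def undom (G : SimpleGraph V) (D : Finset V) : Finset V :=
  univ.filter fun u => ∀ v ∈ D, u ∉ cnbhd G v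

/-- Game value of the indicated domination game with a fuel parameter:
given the set `D` of vertices selected so far, Dominator indicates an
undominated vertex `u` (minimizing), Staller selects a vertex of `N[u]`
(maximizing); each selection counts one. -/
def giAux (G : SimpleGraph V) : ℕ → Finset V → ℕ
  | 0, _ => 0
  | (fuel+1), D =>
    if h : (undom G D).Nonempty then
      (undom G D).inf' h fun u =>
        (cnbhd G u).sup' ⟨u, Finset.mem_insert_self u _⟩ fun v => giAux G fuel (insert v D) + 1
    else 0

/-- The indicated domination number `γᵢ(G)`. -/
def indicatedDomNum (G : SimpleGraph V) : ℕ :=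
  giAux G (Fintype.card V) ∅

/-- Game value of the standard domination game with a fuel parameter:
`dom = true` means it is Dominator's turn (minimizing); legal moves are
vertices dominating at least one new vertex. -/
def gameAux (G : SimpleGraph V) : ℕ → Bool → Finset V → ℕ
  | 0, _, _ => 0
  | (fuel+1), dom, D =>
    if h : (univ.filter fun v => ∃ u ∈ cnbhd G v, u ∈ undom G D).Nonempty then
      if dom then
        (univ.filter fun v => ∃ u ∈ cnbhd G v, u ∈ undom G D).inf' h
          fun v => gameAux G fuel false (insert v D) + 1
      else
        (univ.filter fun v => ∃ u ∈ cnbhd G v, u ∈ undom G D).sup' h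
          fun v => gameAux G fuel true (insert v D) + 1
    else 0

/-- The game domination number `γ_g(G)` (Dominator starts). -/
def gameDomNum (G : SimpleGraph V) : ℕ :=
  gameAux G (Fintype.card V) true ∅

/-- A minimal dominating set. -/
def IsMinimalDominating (G : SimpleGraph V) (D : Finset V) : Prop :=
  Dominates G D ∧ ∀ D' ⊂ D, ¬ Dominates G D'

/-- The upper domination number `Γ(G)`. -/
def upperDomNum (G : SimpleGraph V) : ℕ :=
  sSup {k | ∃ D : Finset V, IsMinimalDominating G D ∧ D.card = k}

/-- A dominating (Grundy) sequence: every vertex dominates something new,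
and the whole sequence dominates `G`. -/
def IsDominatingSeq (G : SimpleGraph V) (l : List V) : Prop :=
  (∀ i : Fin l.length, ∃ u, u ∈ cnbhd G (l.get i) ∧
      ∀ j : Fin l.length, (j : ℕ) < (i : ℕ) → u ∉ cnbhd G (l.get j)) ∧
    Dominates G l.toFinset

/-- The Grundy domination number `γ_gr(G)`. -/
def grundyDomNum (G : SimpleGraph V) : ℕ :=
  sSup {k | ∃ l : List V, IsDominatingSeq G l ∧ l.length = k}

/-- The independence number `α(G)`. -/
def indepNum (G : SimpleGraph V) : ℕ :=
  sSup {k | ∃ S : Finset V, (∀ x ∈ S, ∀ y ∈ S, ¬ G.Adj x y) ∧ S.card = k}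

/-- `S` is irredundant: every `x ∈ S` has a private neighbor w.r.t. `S`. -/
def Irredundant (G : SimpleGraph V) (S : Finset V) : Prop :=
  ∀ x ∈ S, ∃ w, (∃ v ∈ S, w ∈ cnbhd G v) ∧ ¬ ∃ v ∈ S.erase x, w ∈ cnbhd G v

/-- The upper irredundance number `IR(G)`. -/
def upperIrredNum (G : SimpleGraph V) : ℕ :=
  sSup {k | ∃ S : Finset V, Irredundant G S ∧ (∀ T, S ⊂ T → ¬ Irredundant G T) ∧ S.card = k}

/-- The star `K_{1,n}` with center `0`. -/
def starGraph (n : ℕ) : SimpleGraph (Fin (n+1)) where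
  Adj a b := a ≠ b ∧ (a = 0 ∨ b = 0)
  symm := by constructor; intro a b h; exact ⟨h.1.symm, h.2.symm⟩
  loopless := by constructor; intro a h; exact h.1 rfl

/-- Two copies of `K_n` with a matching joining corresponding vertices of
index `≥ 1` (i.e. `K_n □ K₂` minus the matching edge at index `0`). -/
def Hgraph (n : ℕ) : SimpleGraph (Fin n × Bool) where
  Adj a b := (a.2 = b.2 ∧ a.1 ≠ b.1) ∨ (a.2 ≠ b.2 ∧ a.1 = b.1 ∧ (a.1 : ℕ) ≠ 0)
  symm := by
    constructor; rintro ⟨i, s⟩ ⟨j, t⟩ (⟨h1, h2⟩ | ⟨h1, h2, h3⟩)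
    · exact Or.inl ⟨h1.symm, h2.symm⟩
    · exact Or.inr ⟨h1.symm, h2.symm, h2 ▸ h3⟩
  loopless := by constructor; rintro ⟨i, s⟩ (⟨_, h⟩ | ⟨h, _⟩) <;> exact h rfl

/-- The `k`-th power of the path on `n` vertices: `i ~ j` iff `1 ≤ |i-j| ≤ k`. -/
def pathPow (n k : ℕ) : SimpleGraph (Fin n) where
  Adj i j := i ≠ j ∧ (i : ℕ) ≤ (j : ℕ) + k ∧ (j : ℕ) ≤ (i : ℕ) + k
  symm := by constructor; intro i j h; exact ⟨h.1.symm, h.2.2, h.2.1⟩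
  loopless := by constructor; intro i h; exact h.1 rfl

/-- The cycle on `m` vertices (for `m ≥ 3`), modeled on `ZMod m`. -/
def cyc (m : ℕ) : SimpleGraph (ZMod m) where
  Adj i j := i ≠ j ∧ (i + 1 = j ∨ j + 1 = i)
  symm := by constructor; intro i j h; exact ⟨h.1.symm, h.2.symm⟩
  loopless := by constructor; intro i h; exact h.1 rfl

/-- The graph `D₁`: a `9`-cycle `x₁x₂…x₉` plus chords `x₁x₃, x₄x₆, x₇x₉`
(vertex `xᵢ` is represented by `i - 1 : ZMod 9`). -/
def DGraph : SimpleGraph (ZMod 9) where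
  Adj i j := i ≠ j ∧ (i + 1 = j ∨ j + 1 = i ∨
    (i = 0 ∧ j = 2) ∨ (i = 2 ∧ j = 0) ∨ (i = 3 ∧ j = 5) ∨ (i = 5 ∧ j = 3) ∨
    (i = 6 ∧ j = 8) ∨ (i = 8 ∧ j = 6))
  symm := by constructor; intro i j h; refine ⟨h.1.symm, ?_⟩; tauto
  loopless := by constructor; intro i h; exact h.1 rfl


set_option linter.unusedSectionVars false

def Chordal (G : SimpleGraph V) : Prop := ∀ m : ℕ, 4 ≤ m → IsEmpty (cyc m ↪g G)

lemma zmod_succ_eq {n : ℕ} (hn : 4 ≤ n) (z w : ZMod n) :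
    z + 1 = w ↔ (z.val + 1 = w.val ∨ (z.val + 1 = n ∧ w.val = 0)) := by
  haveI : NeZero n := ⟨by omega⟩
  haveI : Fact (1 < n) := ⟨by omega⟩
  have hz := ZMod.val_lt z
  have hw := ZMod.val_lt w
  constructor
  · intro h
    have : (z + 1).val = w.val := by rw [h]
    rw [ZMod.val_add, ZMod.val_one] at this
    rcases Nat.lt_or_ge (z.val + 1) n with h1 | h1
    · left; rwa [Nat.mod_eq_of_lt h1] at this
    · right
      have : (z.val + 1) % n = w.val := this
      have hzn : z.val + 1 = n := by omega
      rw [hzn, Nat.mod_self] at this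
      exact ⟨hzn, this.symm⟩
  · intro h
    apply ZMod.val_injective
    rw [ZMod.val_add, ZMod.val_one]
    rcases h with ⟨h⟩ | ⟨h1, h2⟩
    · rw [h]; exact Nat.mod_eq_of_lt (h ▸ hw)
    · rw [h1, Nat.mod_self, h2]

lemma no_chordless_cycle {G : SimpleGraph V} (hc : Chordal G)
    {n : ℕ} (hn : 4 ≤ n) (f : ℕ → V)
    (hinj : ∀ i < n, ∀ j < n, f i = f j → i = j)
    (hadj : ∀ i < n, ∀ j < n, (G.Adj (f i) (f j) ↔
      (i + 1 = j ∨ j + 1 = i ∨ (i + 1 = n ∧ j = 0) ∨ (j + 1 = n ∧ i = 0)))) :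
    False := by
  haveI : NeZero n := ⟨by omega⟩
  set g : ZMod n → V := fun z => f z.val with hg
  have hginj : Function.Injective g := by
    intro z w h
    exact ZMod.val_injective n (hinj _ (ZMod.val_lt z) _ (ZMod.val_lt w) h)
  have key : ∀ z w : ZMod n, G.Adj (g z) (g w) ↔ (cyc n).Adj z w := by
    intro z w
    have hz := ZMod.val_lt z
    have hw := ZMod.val_lt w
    constructor
    · intro h
      have hzw : z ≠ w := by rintro rfl; exact G.loopless.irrefl _ h
      refine ⟨hzw, ?_⟩
      rcases (hadj _ hz _ hw).1 h with h1 | h1 | ⟨h1, h2⟩ | ⟨h1, h2⟩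
      · exact Or.inl ((zmod_succ_eq hn z w).2 (Or.inl h1))
      · exact Or.inr ((zmod_succ_eq hn w z).2 (Or.inl h1))
      · exact Or.inl ((zmod_succ_eq hn z w).2 (Or.inr ⟨h1, h2⟩))
      · exact Or.inr ((zmod_succ_eq hn w z).2 (Or.inr ⟨h1, h2⟩))
    · rintro ⟨hzw, h1 | h1⟩
      · rcases (zmod_succ_eq hn z w).1 h1 with h2 | ⟨h2, h3⟩
        · exact (hadj _ hz _ hw).2 (Or.inl h2)
        · exact (hadj _ hz _ hw).2 (Or.inr (Or.inr (Or.inl ⟨h2, h3⟩)))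
      · rcases (zmod_succ_eq hn w z).1 h1 with h2 | ⟨h2, h3⟩
        · exact (hadj _ hz _ hw).2 (Or.inr (Or.inl h2))
        · exact (hadj _ hz _ hw).2 (Or.inr (Or.inr (Or.inr ⟨h2, h3⟩)))
  exact (hc n hn).false ⟨⟨g, hginj⟩, fun {z w} => key z w⟩

set_option linter.unusedSectionVars false

/-- A path of `k+1` edges from `s` to `t` whose interior lies in `A`. -/
def Conn (G : SimpleGraph V) (A : Set V) (s t : V) (k : ℕ) : Prop :=
  ∃ g : ℕ → V, g 0 = s ∧ g (k + 1) = t ∧ (∀ i, 1 ≤ i → i ≤ k → g i ∈ A) ∧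
    ∀ i ≤ k, G.Adj (g i) (g (i + 1))

lemma conn_props {G : SimpleGraph V} {A : Set V} {s t : V} {k : ℕ}
    (hk : Conn G A s t k) (hmin : ∀ k' < k, ¬ Conn G A s t k') (hst : s ≠ t) :
    ∃ g : ℕ → V, g 0 = s ∧ g (k + 1) = t ∧ (∀ i, 1 ≤ i → i ≤ k → g i ∈ A) ∧
      (∀ i j, i < j → j ≤ k + 1 → (G.Adj (g i) (g j) ↔ i + 1 = j)) ∧
      (∀ i j, i < j → j ≤ k + 1 → g i ≠ g j) := by
  obtain ⟨g, hg0, hgk, hgA, hgadj⟩ := hk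
  have noadj : ∀ i j, i < j → j ≤ k + 1 → i + 1 ≠ j → ¬ G.Adj (g i) (g j) := by
    intro i j hij hj hne hadj
    obtain ⟨d, rfl⟩ : ∃ d, j = i + 1 + d + 1 := ⟨j - i - 2, by omega⟩
    -- shortcut: new parameter k' = k - (d+1)
    refine hmin (k - (d + 1)) (by omega) ⟨fun x => if x ≤ i then g x else g (x + (d + 1)),
      ?_, ?_, ?_, ?_⟩
    · simp [hg0]
    · have h1 : ¬ (k - (d + 1) + 1 ≤ i) := by omega
      dsimp only; rw [if_neg h1]
      have : k - (d + 1) + 1 + (d + 1) = k + 1 := by omega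
      rw [this, hgk]
    · intro x hx1 hx2
      by_cases h : x ≤ i
      · dsimp only; rw [if_pos h]; exact hgA x hx1 (by omega)
      · dsimp only; rw [if_neg h]; exact hgA _ (by omega) (by omega)
    · intro x hx
      by_cases h : x ≤ i
      · by_cases h' : x + 1 ≤ i
        · dsimp only; rw [if_pos h, if_pos h']; exact hgadj x (by omega)
        · have hxi : x = i := by omega
          dsimp only; rw [if_pos h, if_neg h', hxi]
          have : i + 1 + (d + 1) = i + 1 + d + 1 := by omega
          rw [this]; exact hadj
      · dsimp only; rw [if_neg h, if_neg (by omega : ¬ x + 1 ≤ i)]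
        have : x + 1 + (d + 1) = x + (d + 1) + 1 := by omega
        rw [this]
        exact hgadj _ (by omega)
  have noeq : ∀ i j, i < j → j ≤ k + 1 → g i ≠ g j := by
    intro i j hij hj heq
    by_cases hjk : j = k + 1
    · subst hjk
      rcases Nat.eq_zero_or_pos i with rfl | hi
      · exact hst (hg0 ▸ hgk ▸ heq ▸ rfl)
      · -- truncate: Conn (i-1) with g itself
        refine hmin (i - 1) (by omega) ⟨g, hg0, ?_, fun x hx1 hx2 => hgA x hx1 (by omega),
          fun x hx => hgadj x (by omega)⟩
        have : i - 1 + 1 = i := by omega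
        rw [this, heq, hgk]
    · have hjk' : j ≤ k := by omega
      rcases Nat.eq_zero_or_pos i with rfl | hi
      · -- g j = s : drop prefix
        refine hmin (k - j) (by omega) ⟨fun x => g (x + j), ?_, ?_, ?_, ?_⟩
        · simp [← heq, hg0]
        · dsimp only
          have : k - j + 1 + j = k + 1 := by omega
          rw [this, hgk]
        · intro x hx1 hx2; exact hgA _ (by omega) (by omega)
        · intro x hx
          dsimp only
          have : x + 1 + j = x + j + 1 := by omega
          rw [this]; exact hgadj _ (by omega)
      · -- interior repeat: splice out
        obtain ⟨d, rfl⟩ : ∃ d, j = i + (d + 1) := ⟨j - i - 1, by omega⟩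
        refine hmin (k - (d + 1)) (by omega) ⟨fun x => if x ≤ i then g x else g (x + (d + 1)),
          ?_, ?_, ?_, ?_⟩
        · simp [hg0]
        · have h1 : ¬ (k - (d + 1) + 1 ≤ i) := by omega
          dsimp only; rw [if_neg h1]
          have : k - (d + 1) + 1 + (d + 1) = k + 1 := by omega
          rw [this, hgk]
        · intro x hx1 hx2
          by_cases h : x ≤ i
          · dsimp only; rw [if_pos h]; exact hgA x hx1 (by omega)
          · dsimp only; rw [if_neg h]; exact hgA _ (by omega) (by omega)
        · intro x hx
          by_cases h : x ≤ i
          · by_cases h' : x + 1 ≤ i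
            · dsimp only; rw [if_pos h, if_pos h']; exact hgadj x (by omega)
            · have hxi : x = i := by omega
              dsimp only; rw [if_pos h, if_neg h', hxi, heq]
              have : i + 1 + (d + 1) = i + (d + 1) + 1 := by omega
              rw [this]
              exact hgadj _ (by omega)
          · dsimp only; rw [if_neg h, if_neg (by omega : ¬ x + 1 ≤ i)]
            have : x + 1 + (d + 1) = x + (d + 1) + 1 := by omega
            rw [this]
            exact hgadj _ (by omega)
  refine ⟨g, hg0, hgk, hgA, ?_, noeq⟩
  intro i j hij hj
  constructor
  · intro hadj
    by_contra hne
    exact noadj i j hij hj hne hadj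
  · rintro rfl
    exact hgadj i (by omega)

lemma assembly {G : SimpleGraph V} (hc : Chordal G) {A B : Set V} {s t : V}
    (hdisj : ∀ x, x ∈ A → x ∈ B → False)
    (hnoedge : ∀ x ∈ A, ∀ y ∈ B, ¬ G.Adj x y)
    (hsA : s ∉ A) (hsB : s ∉ B) (htA : t ∉ A) (htB : t ∉ B)
    (hst : s ≠ t) (hna : ¬ G.Adj s t)
    (hA : ∃ k, Conn G A s t k) (hB : ∃ k, Conn G B s t k) : False := by
  classical
  have hconn0A : ¬ Conn G A s t 0 := by
    rintro ⟨g, h0, h1, _, hadj⟩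
    exact hna (h0 ▸ h1 ▸ hadj 0 le_rfl)
  have hconn0B : ¬ Conn G B s t 0 := by
    rintro ⟨g, h0, h1, _, hadj⟩
    exact hna (h0 ▸ h1 ▸ hadj 0 le_rfl)
  set ka := Nat.find hA with hka
  set kb := Nat.find hB with hkb
  have hka1 : 1 ≤ ka := by
    rcases Nat.eq_zero_or_pos ka with h | h
    · exact absurd (h ▸ Nat.find_spec hA) hconn0A
    · exact h
  have hkb1 : 1 ≤ kb := by
    rcases Nat.eq_zero_or_pos kb with h | h
    · exact absurd (h ▸ Nat.find_spec hB) hconn0B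
    · exact h
  obtain ⟨ga, hga0, hgak, hgaA, gaIff, gane⟩ :=
    conn_props (Nat.find_spec hA) (fun k' hk' => Nat.find_min hA hk') hst
  obtain ⟨gb, hgb0, hgbk, hgbB, gbIff, gbne⟩ :=
    conn_props (Nat.find_spec hB) (fun k' hk' => Nat.find_min hB hk') hst
  set n := ka + kb + 2 with hn
  have hn4 : 4 ≤ n := by omega
  set f : ℕ → V := fun i => if i ≤ ka + 1 then ga i else gb (n - i) with hf
  have hfa : ∀ i, i ≤ ka + 1 → f i = ga i := fun i h => if_pos h
  have hfb : ∀ i, ka + 2 ≤ i → f i = gb (n - i) := fun i h => if_neg (by omega)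
  -- injectivity aux
  have aux : ∀ i j, i < j → j < n → f i ≠ f j := by
    intro i j hij hjn
    by_cases hj : j ≤ ka + 1
    · rw [hfa i (by omega), hfa j hj]
      exact gane i j hij hj
    · push_neg at hj
      rw [hfb j (by omega)]
      have hm1 : 1 ≤ n - j := by omega
      have hm2 : n - j ≤ kb := by omega
      by_cases hi2 : i ≤ ka + 1
      · rw [hfa i hi2]
        rcases Nat.eq_zero_or_pos i with rfl | hi0
        · rw [hga0, ← hgb0]
          exact gbne 0 (n - j) (by omega) (by omega)
        · by_cases hika : i ≤ ka
          · intro heq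
            exact hdisj _ (heq ▸ hgaA i hi0 hika) (hgbB (n - j) hm1 hm2)
          · have : i = ka + 1 := by omega
            rw [this, hgak, ← hgbk]
            exact fun heq => (gbne (n - j) (kb + 1) (by omega) (by omega)) heq.symm
      · push_neg at hi2
        rw [hfb i (by omega)]
        exact fun heq => (gbne (n - j) (n - i) (by omega) (by omega)) heq.symm
  have aux2 : ∀ i j, i < j → j < n → (G.Adj (f i) (f j) ↔ (i + 1 = j ∨ (j + 1 = n ∧ i = 0))) := by
    intro i j hij hjn
    by_cases hj : j ≤ ka + 1
    · rw [hfa i (by omega), hfa j hj, gaIff i j hij hj]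
      constructor
      · intro h; exact Or.inl h
      · rintro (h | ⟨h1, h2⟩)
        · exact h
        · omega
    · push_neg at hj
      rw [hfb j (by omega)]
      have hm1 : 1 ≤ n - j := by omega
      have hm2 : n - j ≤ kb := by omega
      by_cases hi2 : i ≤ ka + 1
      · rw [hfa i hi2]
        rcases Nat.eq_zero_or_pos i with rfl | hi0
        · rw [hga0, ← hgb0]
          rw [gbIff 0 (n - j) (by omega) (by omega)]
          constructor
          · intro h; right; constructor <;> omega
          · rintro (h | ⟨h1, h2⟩) <;> omega
        · by_cases hika : i ≤ ka
          · constructor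
            · intro h
              exact absurd h (hnoedge _ (hgaA i hi0 hika) _ (hgbB (n - j) hm1 hm2))
            · rintro (h | ⟨h1, h2⟩) <;> omega
          · have hieq : i = ka + 1 := by omega
            rw [hieq, hgak, ← hgbk, G.adj_comm]
            rw [gbIff (n - j) (kb + 1) (by omega) (by omega)]
            constructor
            · intro h; left; omega
            · rintro (h | ⟨h1, h2⟩) <;> omega
      · push_neg at hi2
        rw [hfb i (by omega), G.adj_comm]
        rw [gbIff (n - j) (n - i) (by omega) (by omega)]
        constructor
        · intro h; left; omega
        · rintro (h | ⟨h1, h2⟩) <;> omega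
  refine no_chordless_cycle hc hn4 f ?_ ?_
  · intro i hi j hj heq
    rcases lt_trichotomy i j with h | h | h
    · exact absurd heq (aux i j h hj)
    · exact h
    · exact absurd heq.symm (aux j i h hi)
  · intro i hi j hj
    rcases lt_trichotomy i j with h | h | h
    · rw [aux2 i j h hj]
      constructor
      · rintro (h1 | ⟨h1, h2⟩)
        · exact Or.inl h1
        · exact Or.inr (Or.inr (Or.inr ⟨h1, h2⟩))
      · rintro (h1 | h1 | ⟨h1, h2⟩ | ⟨h1, h2⟩) <;> first | (left; omega) | (right; constructor <;> omega)
    · subst h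
      constructor
      · intro hadj; exact absurd hadj (G.loopless.irrefl _)
      · rintro (h1 | h1 | ⟨h1, h2⟩ | ⟨h1, h2⟩) <;> omega
    · rw [G.adj_comm, aux2 j i h hi]
      constructor
      · rintro (h1 | ⟨h1, h2⟩)
        · exact Or.inr (Or.inl h1)
        · exact Or.inr (Or.inr (Or.inl ⟨h1, h2⟩))
      · rintro (h1 | h1 | ⟨h1, h2⟩ | ⟨h1, h2⟩) <;> first | (left; omega) | (right; constructor <;> omega)

def Rstep (G : SimpleGraph V) (S : Finset V) (u v : V) : Prop := G.Adj u v ∧ v ∉ S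

lemma rtg_endpoint {G : SimpleGraph V} {S : Finset V} {a b : V}
    (h : Relation.ReflTransGen (Rstep G S) a b) : b = a ∨ b ∉ S := by
  rcases Relation.ReflTransGen.cases_tail h with rfl | ⟨c, _, hstep⟩
  · exact Or.inl rfl
  · exact Or.inr hstep.2

lemma rtg_symm {G : SimpleGraph V} {S : Finset V} {a b : V} (ha : a ∉ S)
    (h : Relation.ReflTransGen (Rstep G S) a b) : Relation.ReflTransGen (Rstep G S) b a := by
  induction h with
  | refl => exact Relation.ReflTransGen.refl
  | @tail b c h1 h2 ih =>
      have hbS : b ∉ S := by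
        rcases rtg_endpoint h1 with rfl | h
        · exact ha
        · exact h
      exact Relation.ReflTransGen.head ⟨h2.1.symm, hbS⟩ ih

lemma rtg_decompose {G : SimpleGraph V} {S : Finset V} {s b : V} {a : V}
    (h : Relation.ReflTransGen (Rstep G (S.erase s)) a b) : a ∉ S →
      (Relation.ReflTransGen (Rstep G S) a b) ∨
        ∃ u, Relation.ReflTransGen (Rstep G S) a u ∧ G.Adj u s := by
  induction h using Relation.ReflTransGen.head_induction_on with
  | refl => exact fun _ => Or.inl Relation.ReflTransGen.refl
  | @head x c h1 h2 ih =>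
      intro hxS
      by_cases hcs : c = s
      · subst hcs
        exact Or.inr ⟨x, Relation.ReflTransGen.refl, h1.1⟩
      · have hcS : c ∉ S := fun hcS => h1.2 (Finset.mem_erase.2 ⟨hcs, hcS⟩)
        rcases ih hcS with hl | ⟨u, h3, h4⟩
        · exact Or.inl (Relation.ReflTransGen.head ⟨h1.1, hcS⟩ hl)
        · exact Or.inr ⟨u, Relation.ReflTransGen.head ⟨h1.1, hcS⟩ h3, h4⟩

lemma rtg_to_fun {r : V → V → Prop} {u w : V} (h : Relation.ReflTransGen r u w) :
    ∃ (m : ℕ) (g : ℕ → V), g 0 = u ∧ g m = w ∧ ∀ i < m, r (g i) (g (i + 1)) := by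
  induction h with
  | refl => exact ⟨0, fun _ => u, rfl, rfl, by omega⟩
  | @tail b c h1 h2 ih =>
      obtain ⟨m, g, hg0, hgm, hstep⟩ := ih
      refine ⟨m + 1, fun i => if i ≤ m then g i else c, ?_, ?_, ?_⟩
      · dsimp only; rw [if_pos (by omega), hg0]
      · dsimp only; rw [if_neg (by omega)]
      · intro i hi
        by_cases h : i + 1 ≤ m
        · dsimp only; rw [if_pos (by omega), if_pos h]; exact hstep i (by omega)
        · have him : i = m := by omega
          subst him
          dsimp only; rw [if_pos le_rfl, if_neg h, hgm]; exact h2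

lemma conn_of_reach {G : SimpleGraph V} {S : Finset V} {a s t u w : V} (haS : a ∉ S)
    (hu : Relation.ReflTransGen (Rstep G S) a u) (hw : Relation.ReflTransGen (Rstep G S) a w)
    (hus : G.Adj u s) (hwt : G.Adj w t) :
    ∃ k, Conn G {x | Relation.ReflTransGen (Rstep G S) a x} s t k := by
  set A : Set V := {x | Relation.ReflTransGen (Rstep G S) a x} with hA
  have huw : Relation.ReflTransGen (Rstep G S) u w := (rtg_symm haS hu).trans hw
  obtain ⟨m, g, hg0, hgm, hstep⟩ := rtg_to_fun huw
  have hmem : ∀ i, i ≤ m → g i ∈ A := by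
    intro i
    induction i with
    | zero => intro _; rw [hg0]; exact hu
    | succ i ih =>
        intro hi
        exact Relation.ReflTransGen.tail (ih (by omega)) (hstep i (by omega))
  refine ⟨m + 1, fun i => if i = 0 then s else if i ≤ m + 1 then g (i - 1) else t, ?_, ?_, ?_, ?_⟩
  · dsimp only; rw [if_pos rfl]
  · dsimp only; rw [if_neg (by omega), if_neg (by omega)]
  · intro i hi1 hi2
    dsimp only; rw [if_neg (by omega), if_pos (by omega)]
    exact hmem (i - 1) (by omega)
  · intro i hi
    rcases Nat.eq_zero_or_pos i with rfl | hi0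
    · dsimp only; rw [if_pos rfl, if_neg (by omega), if_pos (by omega)]
      simpa [hg0] using hus.symm
    · by_cases him : i ≤ m
      · dsimp only; rw [if_neg (by omega : ¬ i = 0), if_pos (by omega : i ≤ m + 1),
          if_neg (by omega : ¬ i + 1 = 0), if_pos (by omega : i + 1 ≤ m + 1)]
        have e1 : i + 1 - 1 = i - 1 + 1 := by omega
        rw [e1]
        exact (hstep (i - 1) (by omega)).1
      · have : i = m + 1 := by omega
        subst this
        dsimp only; rw [if_neg (by omega : ¬ m + 1 = 0), if_pos (by omega : m + 1 ≤ m + 1),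
          if_neg (by omega : ¬ m + 1 + 1 = 0), if_neg (by omega : ¬ m + 1 + 1 ≤ m + 1)]
        have : m + 1 - 1 = m := by omega
        rw [this, hgm]
        exact hwt

def Simplicial (G : SimpleGraph V) (v : V) : Prop :=
  ∀ x y, G.Adj v x → G.Adj v y → x ≠ y → G.Adj x y

omit [Fintype V] in
lemma chordal_induce {G : SimpleGraph V} (hc : Chordal G) (W : Set V) :
    Chordal (G.induce W) := by
  intro m hm
  constructor
  intro f
  exact (hc m hm).false ((SimpleGraph.Embedding.induce W).comp f)

universe u

theorem dirac_pair : ∀ (n : ℕ) {V : Type u} [Fintype V] (G : SimpleGraph V),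
    Fintype.card V ≤ n → Chordal G →
    ∀ a b : V, ¬ G.Adj a b → a ≠ b →
      ∃ v w : V, v ≠ w ∧ ¬ G.Adj v w ∧ Simplicial G v ∧ Simplicial G w := by
  intro n
  induction n with
  | zero =>
      intro V _ G hcard _ a b _ _
      have : 0 < Fintype.card V := Fintype.card_pos_iff.2 ⟨a⟩
      omega
  | succ n ih =>
      intro V _ G hcard hc a b hab hne
      classical
      set T₀ : Finset V := Finset.univ \ {a, b} with hT₀
      have hsep0 : ¬ Relation.ReflTransGen (Rstep G T₀) a b := by
        intro h
        rcases Relation.ReflTransGen.cases_head h with heq | ⟨c, hstep, _⟩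
        · exact hne heq
        · have hcT : c ∉ T₀ := hstep.2
          have : c = a ∨ c = b := by
            by_contra hcc
            push_neg at hcc
            exact hcT (by simp [hT₀, hcc.1, hcc.2])
          rcases this with rfl | rfl
          · exact G.loopless.irrefl _ hstep.1
          · exact hab hstep.1
      set 𝒮 : Set (Finset V) := {T | ¬ Relation.ReflTransGen (Rstep G T) a b ∧ a ∉ T ∧ b ∉ T}
        with h𝒮
      have h𝒮ne : 𝒮.Nonempty := ⟨T₀, hsep0, by simp [hT₀], by simp [hT₀]⟩
      obtain ⟨S, hS𝒮, hSmin⟩ :=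
        (IsWellFounded.wf (r := ((· < ·) : Finset V → Finset V → Prop))).has_min 𝒮 h𝒮ne
      obtain ⟨hSsep, haS, hbS⟩ := hS𝒮
      have hSmin' : ∀ s ∈ S, Relation.ReflTransGen (Rstep G (S.erase s)) a b := by
        intro s hs
        by_contra h
        exact hSmin (S.erase s) ⟨h, fun h' => haS (Finset.mem_of_mem_erase h'),
          fun h' => hbS (Finset.mem_of_mem_erase h')⟩ (Finset.erase_ssubset hs)
      set A : Set V := {x | Relation.ReflTransGen (Rstep G S) a x} with hAdef
      set B : Set V := {x | Relation.ReflTransGen (Rstep G S) b x} with hBdef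
      have haA : a ∈ A := Relation.ReflTransGen.refl
      have hbB : b ∈ B := Relation.ReflTransGen.refl
      have memA_notS : ∀ x ∈ A, x ∉ S := by
        intro x hx
        rcases rtg_endpoint hx with rfl | h
        · exact haS
        · exact h
      have memB_notS : ∀ x ∈ B, x ∉ S := by
        intro x hx
        rcases rtg_endpoint hx with rfl | h
        · exact hbS
        · exact h
      have hdisj : ∀ x, x ∈ A → x ∈ B → False := by
        intro x hxA hxB
        exact hSsep (Relation.ReflTransGen.trans hxA (rtg_symm hbS hxB))
      have hclosA : ∀ x ∈ A, ∀ y, G.Adj x y → y ∉ S → y ∈ A :=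
        fun x hx y hadj hyS => Relation.ReflTransGen.tail hx ⟨hadj, hyS⟩
      have hclosB : ∀ x ∈ B, ∀ y, G.Adj x y → y ∉ S → y ∈ B :=
        fun x hx y hadj hyS => Relation.ReflTransGen.tail hx ⟨hadj, hyS⟩
      have hnoedge : ∀ x ∈ A, ∀ y ∈ B, ¬ G.Adj x y := by
        intro x hxA y hyB hadj
        exact hdisj y (hclosA x hxA y hadj (memB_notS y hyB)) hyB
      have hnbrs : ∀ s ∈ S, (∃ u ∈ A, G.Adj u s) ∧ (∃ w ∈ B, G.Adj w s) := by
        intro s hs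
        constructor
        · rcases rtg_decompose (hSmin' s hs) haS with h | ⟨u, hu, hadj⟩
          · exact absurd h hSsep
          · exact ⟨u, hu, hadj⟩
        · have hrev : Relation.ReflTransGen (Rstep G (S.erase s)) b a :=
            rtg_symm (fun h => haS (Finset.mem_of_mem_erase h)) (hSmin' s hs)
          rcases rtg_decompose hrev hbS with h | ⟨w, hw, hadj⟩
          · exact absurd (rtg_symm hbS h) hSsep
          · exact ⟨w, hw, hadj⟩
      have hclique : ∀ s ∈ S, ∀ t ∈ S, s ≠ t → G.Adj s t := by
        intro s hs t ht hst
        by_contra hnadj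
        obtain ⟨⟨us, husA, husadj⟩, _⟩ := hnbrs s hs
        obtain ⟨⟨ut, hutA, hutadj⟩, _⟩ := hnbrs t ht
        obtain ⟨_, ⟨ws, hwsB, hwsadj⟩⟩ := hnbrs s hs
        obtain ⟨_, ⟨wt, hwtB, hwtadj⟩⟩ := hnbrs t ht
        exact assembly hc hdisj hnoedge
          (fun h => memA_notS s h hs) (fun h => memB_notS s h hs)
          (fun h => memA_notS t h ht) (fun h => memB_notS t h ht)
          hst hnadj
          (conn_of_reach haS husA hutA husadj hutadj)
          (conn_of_reach hbS hwsB hwtB hwsadj hwtadj)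
      -- extraction of a simplicial vertex on each side
      have side : ∀ (C : Set V) (c : V), c ∈ C → (∀ x ∈ C, x ∉ S) →
          (∀ x ∈ C, ∀ y, G.Adj x y → y ∉ S → y ∈ C) →
          (∃ z, z ∉ C ∧ z ∉ S) → ∃ v, v ∈ C ∧ Simplicial G v := by
        intro C c hcC hCS hclos ⟨z, hzC, hzS⟩
        set W : Set V := C ∪ ↑S with hW
        haveI : Fintype ↥W := Fintype.ofFinite _
        have hzW : z ∉ W := by
          intro h
          rcases h with h | h
          · exact hzC h
          · exact hzS h
        have hcardW : Fintype.card ↥W ≤ n := by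
          have : Fintype.card ↥W < Fintype.card V := by
            apply Fintype.card_lt_of_injective_of_notMem (Subtype.val) Subtype.val_injective
              (b := z)
            rw [Subtype.range_coe]
            exact hzW
          omega
        have hWmem : ∀ x ∈ C, ∀ y, G.Adj x y → y ∈ W := by
          intro x hx y hadj
          by_cases hyS : y ∈ S
          · exact Or.inr hyS
          · exact Or.inl (hclos x hx y hadj hyS)
        have key : ∀ z : ↥W, Simplicial (G.induce W) z → (z : V) ∈ C →
            Simplicial G (z : V) := by
          intro z hz hzC x y hadj1 hadj2 hxy
          have hxW : x ∈ W := hWmem _ hzC x hadj1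
          have hyW : y ∈ W := hWmem _ hzC y hadj2
          have := hz ⟨x, hxW⟩ ⟨y, hyW⟩ hadj1 hadj2 (fun h => hxy (congrArg Subtype.val h))
          exact this
        by_cases hcomp : ∀ u v : ↥W, u ≠ v → (G.induce W).Adj u v
        · refine ⟨c, hcC, ?_⟩
          refine key ⟨c, Or.inl hcC⟩ ?_ hcC
          intro x y hadj1 hadj2 hxy
          exact hcomp x y hxy
        · push_neg at hcomp
          obtain ⟨u, v, huv, hnadj⟩ := hcomp
          obtain ⟨v1, w1, hne1, hnadj1, hsimp1, hsimp2⟩ :=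
            ih (G.induce W) hcardW (chordal_induce hc W) u v hnadj huv
          have hvalne : (v1 : V) ≠ (w1 : V) := fun h => hne1 (Subtype.ext h)
          have : (v1 : V) ∈ C ∨ (w1 : V) ∈ C := by
            by_contra h
            push_neg at h
            have hv1S : (v1 : V) ∈ S := by
              rcases v1.2 with h' | h'
              · exact absurd h' h.1
              · exact h'
            have hw1S : (w1 : V) ∈ S := by
              rcases w1.2 with h' | h'
              · exact absurd h' h.2
              · exact h'
            exact hnadj1 (hclique _ hv1S _ hw1S hvalne)
          rcases this with h | h
          · exact ⟨v1, h, key v1 hsimp1 h⟩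
          · exact ⟨w1, h, key w1 hsimp2 h⟩
      obtain ⟨vA, hvAA, hvAsimp⟩ := side A a haA memA_notS hclosA
        ⟨b, fun h => hdisj b h hbB, hbS⟩
      obtain ⟨vB, hvBB, hvBsimp⟩ := side B b hbB memB_notS hclosB
        ⟨a, fun h => hdisj a haA h, haS⟩
      exact ⟨vA, vB, fun h => hdisj vA hvAA (h ▸ hvBB), hnoedge vA hvAA vB hvBB,
        hvAsimp, hvBsimp⟩

theorem exists_simplicial {V : Type u} [Fintype V] (G : SimpleGraph V) (hc : Chordal G)
    (hne : Nonempty V) : ∃ v, Simplicial G v := by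
  by_cases hcomp : ∀ u v : V, u ≠ v → G.Adj u v
  · obtain ⟨v⟩ := hne
    exact ⟨v, fun x y _ _ hxy => hcomp x y hxy⟩
  · push_neg at hcomp
    obtain ⟨u, v, huv, hnadj⟩ := hcomp
    obtain ⟨w, _, _, _, hsimp, _⟩ :=
      dirac_pair (Fintype.card V) G le_rfl hc u v hnadj huv
    exact ⟨w, hsimp⟩

def IsPEO (G : SimpleGraph V) (rank : V → ℕ) : Prop :=
  Function.Injective rank ∧
    ∀ v x y, G.Adj v x → G.Adj v y → rank v < rank x → rank v < rank y → x ≠ y → G.Adj x y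

theorem exists_peo : ∀ (n : ℕ) {V : Type u} [Fintype V] (G : SimpleGraph V),
    Fintype.card V ≤ n → Chordal G → ∃ rank, IsPEO G rank := by
  intro n
  induction n with
  | zero =>
      intro V _ G hcard _
      haveI : IsEmpty V := Fintype.card_eq_zero_iff.1 (by omega)
      exact ⟨fun _ => 0, fun v => isEmptyElim v, fun v => isEmptyElim v⟩
  | succ n ih =>
      intro V _ G hcard hc
      classical
      rcases isEmpty_or_nonempty V with hV | hV
      · exact ⟨fun _ => 0, fun v => isEmptyElim v, fun v => isEmptyElim v⟩
      obtain ⟨v₀, hv₀⟩ := exists_simplicial G hc hV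
      set W : Set V := {x | x ≠ v₀} with hW
      haveI : Fintype ↥W := Fintype.ofFinite _
      have hcardW : Fintype.card ↥W ≤ n := by
        have : Fintype.card ↥W < Fintype.card V := by
          apply Fintype.card_lt_of_injective_of_notMem (Subtype.val) Subtype.val_injective
            (b := v₀)
          rw [Subtype.range_coe]
          exact fun h => h rfl
        omega
      obtain ⟨rank', hinj', hpeo'⟩ := ih (G.induce W) hcardW (chordal_induce hc W)
      refine ⟨fun x => if h : x = v₀ then 0 else rank' ⟨x, h⟩ + 1, ?_, ?_⟩
      · intro x y h
        dsimp only at h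
        by_cases hx : x = v₀ <;> by_cases hy : y = v₀
        · rw [hx, hy]
        · rw [dif_pos hx, dif_neg hy] at h; omega
        · rw [dif_neg hx, dif_pos hy] at h; omega
        · rw [dif_neg hx, dif_neg hy] at h
          have h2 : rank' ⟨x, hx⟩ = rank' ⟨y, hy⟩ := by omega
          exact congrArg Subtype.val (hinj' h2)
      · intro v x y hvx hvy hrvx hrvy hxy
        dsimp only at hrvx hrvy
        by_cases hv : v = v₀
        · subst hv
          exact hv₀ x y hvx hvy hxy
        · have hx : x ≠ v₀ := by
            intro h
            rw [dif_neg hv, dif_pos h] at hrvx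
            omega
          have hy : y ≠ v₀ := by
            intro h
            rw [dif_neg hv, dif_pos h] at hrvy
            omega
          rw [dif_neg hv, dif_neg hx] at hrvx
          rw [dif_neg hv, dif_neg hy] at hrvy
          exact hpeo' ⟨v, hv⟩ ⟨x, hx⟩ ⟨y, hy⟩ hvx hvy (by omega) (by omega)
            (fun h => hxy (congrArg Subtype.val h))



lemma mem_cnbhd {G : SimpleGraph V} {u v : V} : u ∈ cnbhd G v ↔ u = v ∨ G.Adj v u := by
  simp [cnbhd, SimpleGraph.mem_neighborFinset]

lemma irred_indep {G : SimpleGraph V} {rank : V → ℕ} (hpeo : IsPEO G rank)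
    (S : Finset V) (hS : Irredundant G S) :
    ∃ I : Finset V, (∀ x ∈ I, ∀ y ∈ I, ¬ G.Adj x y) ∧ I.card = S.card := by
  classical
  obtain ⟨hinj, hord⟩ := hpeo
  have hp : ∀ x ∈ S, ∃ w, w ∈ cnbhd G x ∧ ∀ y ∈ S, y ≠ x → w ∉ cnbhd G y := by
    intro x hx
    obtain ⟨w, ⟨v, hv, hw⟩, hpriv⟩ := hS x hx
    push_neg at hpriv
    have hvx : v = x := by
      by_contra h
      exact hpriv v (Finset.mem_erase.2 ⟨h, hv⟩) hw
    exact ⟨w, hvx ▸ hw, fun y hy hyx => hpriv y (Finset.mem_erase.2 ⟨hyx, hy⟩)⟩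
  choose! p hp1 hp2 using hp
  set c : V → V := fun x => if rank x < rank (p x) then x else p x with hc
  have hcinj : Set.InjOn c S := by
    intro x hx y hy heq
    by_contra hxy
    simp only [hc] at heq
    by_cases h1 : rank x < rank (p x) <;> by_cases h2 : rank y < rank (p y)
    · rw [if_pos h1, if_pos h2] at heq; exact hxy heq
    · rw [if_pos h1, if_neg h2] at heq
      exact hp2 y hy x hx hxy (mem_cnbhd.2 (Or.inl heq.symm))
    · rw [if_neg h1, if_pos h2] at heq
      exact hp2 x hx y hy (fun h => hxy h.symm) (mem_cnbhd.2 (Or.inl heq))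
    · rw [if_neg h1, if_neg h2] at heq
      have := hp1 x hx
      rw [heq] at this
      exact hp2 y hy x hx hxy this
  have hTT : ∀ x ∈ S, ∀ y ∈ S, rank x < rank (p x) → rank y < rank (p y) →
      rank x < rank y → ¬ G.Adj x y := by
    intro x hx y hy hpx hpy hxy hadj
    have hxyne : x ≠ y := fun h => by rw [h] at hxy; omega
    have hpxx : p x ≠ x := fun h => by rw [h] at hpx; omega
    have hadjpx : G.Adj x (p x) := (mem_cnbhd.1 (hp1 x hx)).resolve_left hpxx
    have hypx : y ≠ p x := by
      intro h
      exact hp2 x hx y hy hxyne.symm (mem_cnbhd.2 (Or.inl h.symm))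
    have := hord x y (p x) hadj hadjpx hxy hpx hypx
    exact hp2 x hx y hy hxyne.symm (mem_cnbhd.2 (Or.inr this))
  have hPP : ∀ x ∈ S, ∀ y ∈ S, x ≠ y → ¬ rank x < rank (p x) → ¬ rank y < rank (p y) →
      rank (p x) < rank (p y) → ¬ G.Adj (p x) (p y) := by
    intro x hx y hy hxy hpx hpy hpp hadj
    by_cases hpxx : p x = x
    · rw [hpxx] at hadj
      exact hp2 y hy x hx hxy (mem_cnbhd.2 (Or.inr hadj))
    · have hadjxpx : G.Adj (p x) x := ((mem_cnbhd.1 (hp1 x hx)).resolve_left hpxx).symm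
      have hrpx : rank (p x) < rank x := by
        have : rank (p x) ≠ rank x := fun h => hpxx (hinj h)
        omega
      have hxpy : x ≠ p y := by
        intro h
        exact hp2 y hy x hx hxy (mem_cnbhd.2 (Or.inl h.symm))
      have := hord (p x) (p y) x hadj hadjxpx hpp hrpx (fun h => hxpy h.symm)
      exact hp2 y hy x hx hxy (mem_cnbhd.2 (Or.inr this.symm))
  refine ⟨S.image c, ?_, Finset.card_image_of_injOn hcinj⟩
  intro u hu v hv hadj
  obtain ⟨x, hx, rfl⟩ := Finset.mem_image.1 hu
  obtain ⟨y, hy, rfl⟩ := Finset.mem_image.1 hv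
  by_cases hxy : x = y
  · subst hxy
    exact G.loopless.irrefl _ hadj
  simp only [hc] at hadj
  by_cases h1 : rank x < rank (p x) <;> by_cases h2 : rank y < rank (p y)
  · rw [if_pos h1, if_pos h2] at hadj
    have hrne : rank x ≠ rank y := fun h => hxy (hinj h)
    rcases Nat.lt_or_ge (rank x) (rank y) with h | h
    · exact hTT x hx y hy h1 h2 h hadj
    · exact hTT y hy x hx h2 h1 (by omega) hadj.symm
  · rw [if_pos h1, if_neg h2] at hadj
    exact hp2 y hy x hx hxy (mem_cnbhd.2 (Or.inr hadj))
  · rw [if_neg h1, if_pos h2] at hadj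
    exact hp2 x hx y hy (fun h => hxy h.symm) (mem_cnbhd.2 (Or.inr hadj.symm))
  · rw [if_neg h1, if_neg h2] at hadj
    have hppne : p x ≠ p y := G.ne_of_adj hadj
    have hrne : rank (p x) ≠ rank (p y) := fun h => hppne (hinj h)
    rcases Nat.lt_or_ge (rank (p x)) (rank (p y)) with h | h
    · exact hPP x hx y hy hxy h1 h2 h hadj
    · exact hPP y hy x hx (fun h => hxy h.symm) h2 h1 (by omega) hadj.symm






lemma bdd_card (P : Finset V → Prop) : BddAbove {k | ∃ S, P S ∧ S.card = k} := by
  refine ⟨Fintype.card V, ?_⟩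
  rintro k ⟨S, _, rfl⟩
  simpa using S.card_le_univ

lemma bdd_card2 (P Q : Finset V → Prop) :
    BddAbove {k | ∃ S, P S ∧ Q S ∧ S.card = k} := by
  refine ⟨Fintype.card V, ?_⟩
  rintro k ⟨S, _, _, rfl⟩
  simpa using S.card_le_univ

lemma indep_card_le {G : SimpleGraph V} {S : Finset V}
    (hS : ∀ x ∈ S, ∀ y ∈ S, ¬ G.Adj x y) : S.card ≤ indepNum G :=
  le_csSup (bdd_card _) ⟨S, hS, rfl⟩

lemma alpha_le_gamma (G : SimpleGraph V) : indepNum G ≤ upperDomNum G := by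
  classical
  have hmem : indepNum G ∈ {k | ∃ S : Finset V, (∀ x ∈ S, ∀ y ∈ S, ¬ G.Adj x y) ∧ S.card = k} :=
    Nat.sSup_mem ⟨0, ∅, by simp⟩ (bdd_card _)
  obtain ⟨Smax, hSind, hcard⟩ := hmem
  have hdom : Dominates G Smax := by
    intro u
    by_cases hu : u ∈ Smax
    · exact ⟨u, hu, mem_cnbhd.2 (Or.inl rfl)⟩
    · have hni : ¬ (∀ x ∈ insert u Smax, ∀ y ∈ insert u Smax, ¬ G.Adj x y) := by
        intro hind
        have h1 : (insert u Smax).card ≤ indepNum G := indep_card_le hind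
        rw [Finset.card_insert_of_notMem hu] at h1
        omega
      push_neg at hni
      obtain ⟨x, hxm, y, hym, hadj⟩ := hni
      rcases Finset.mem_insert.1 hxm with rfl | hxS
      · rcases Finset.mem_insert.1 hym with rfl | hyS
        · exact absurd hadj (G.loopless.irrefl _)
        · exact ⟨y, hyS, mem_cnbhd.2 (Or.inr hadj.symm)⟩
      · rcases Finset.mem_insert.1 hym with rfl | hyS
        · exact ⟨x, hxS, mem_cnbhd.2 (Or.inr hadj)⟩
        · exact absurd hadj (hSind x hxS y hyS)
  have hminimal : ∀ D' ⊂ Smax, ¬ Dominates G D' := by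
    intro D' hD' hdom'
    obtain ⟨x, hxS, hxD⟩ := Finset.exists_of_ssubset hD'
    obtain ⟨v, hvD, hxv⟩ := hdom' x
    rcases mem_cnbhd.1 hxv with rfl | hadj
    · exact hxD hvD
    · exact hSind v (hD'.subset hvD) x hxS hadj
  calc indepNum G = Smax.card := hcard.symm
    _ ≤ upperDomNum G := le_csSup (bdd_card _) ⟨Smax, ⟨hdom, hminimal⟩, rfl⟩

lemma gamma_set_nonempty (G : SimpleGraph V) :
    ∃ D : Finset V, IsMinimalDominating G D := by
  classical
  have hdomuniv : Dominates G Finset.univ := fun u =>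
    ⟨u, Finset.mem_univ u, mem_cnbhd.2 (Or.inl rfl)⟩
  obtain ⟨D, hD, hmin⟩ :=
    (IsWellFounded.wf (r := ((· < ·) : Finset V → Finset V → Prop))).has_min
      {D | Dominates G D} ⟨Finset.univ, hdomuniv⟩
  exact ⟨D, hD, fun D' hsub hdom' => hmin D' hdom' hsub⟩

lemma gamma_le_IR (G : SimpleGraph V) : upperDomNum G ≤ upperIrredNum G := by
  classical
  obtain ⟨D0, hD0⟩ := gamma_set_nonempty G
  have hmem : upperDomNum G ∈ {k | ∃ D : Finset V, IsMinimalDominating G D ∧ D.card = k} :=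
    Nat.sSup_mem ⟨D0.card, D0, hD0, rfl⟩ (bdd_card _)
  obtain ⟨D, ⟨hdom, hminimal⟩, hcard⟩ := hmem
  have hirr : Irredundant G D := by
    intro x hx
    have hnd := hminimal (D.erase x) (Finset.erase_ssubset hx)
    rw [Dominates] at hnd
    push_neg at hnd
    obtain ⟨u, hu⟩ := hnd
    refine ⟨u, hdom u, ?_⟩
    rintro ⟨v, hv, hmemv⟩
    exact hu v hv hmemv
  have hmax : ∀ T, D ⊂ T → ¬ Irredundant G T := by
    intro T hsub hirrT
    obtain ⟨x, hxT, hxD⟩ := Finset.exists_of_ssubset hsub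
    obtain ⟨w, _, hpriv⟩ := hirrT x hxT
    obtain ⟨v, hvD, hwv⟩ := hdom w
    exact hpriv ⟨v, Finset.mem_erase.2 ⟨fun h => hxD (h ▸ hvD), hsub.subset hvD⟩, hwv⟩
  calc upperDomNum G = D.card := hcard.symm
    _ ≤ upperIrredNum G := le_csSup (bdd_card2 _ _) ⟨D, hirr, hmax, rfl⟩

lemma IR_set_nonempty (G : SimpleGraph V) :
    ∃ S : Finset V, Irredundant G S ∧ ∀ T, S ⊂ T → ¬ Irredundant G T := by
  classical
  have hmem : sSup {k | ∃ S : Finset V, Irredundant G S ∧ S.card = k} ∈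
      {k | ∃ S : Finset V, Irredundant G S ∧ S.card = k} :=
    Nat.sSup_mem ⟨0, ∅, by simp [Irredundant], rfl⟩ (bdd_card _)
  obtain ⟨S, hirr, hcard⟩ := hmem
  refine ⟨S, hirr, ?_⟩
  intro T hsub hirrT
  have h1 : T.card ≤ S.card := hcard ▸ le_csSup (bdd_card _) ⟨T, hirrT, rfl⟩
  have h2 : S.card < T.card := Finset.card_lt_card hsub
  omega

lemma IR_le_alpha (G : SimpleGraph V) (hc : Chordal G) :
    upperIrredNum G ≤ indepNum G := by
  classical
  obtain ⟨S0, h1, h2⟩ := IR_set_nonempty G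
  refine csSup_le ⟨S0.card, S0, h1, h2, rfl⟩ ?_
  rintro k ⟨S, hirr, _, rfl⟩
  obtain ⟨rank, hpeo⟩ := exists_peo (Fintype.card V) G le_rfl hc
  obtain ⟨I, hI, hIcard⟩ := irred_indep hpeo S hirr
  calc S.card = I.card := hIcard.symm
    _ ≤ indepNum G := indep_card_le hI


/-- if `G` is chordal (no induced cycle of length at least 4),
then `α(G) = Γ(G) = IR(G)`. -/
theorem stmt17 {V : Type*} [Fintype V] (G : SimpleGraph V)
    (hchordal : ∀ m : ℕ, 4 ≤ m → IsEmpty (cyc m ↪g G)) :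
    indepNum G = upperDomNum G ∧ upperDomNum G = upperIrredNum G := by
  have h1 := alpha_le_gamma G
  have h2 := gamma_le_IR G
  have h3 := IR_le_alpha G hchordal
  exact ⟨le_antisymm h1 (le_trans h2 h3), le_antisymm h2 (le_trans h3 h1)⟩


end IndicatedDom
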